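/- Let Λ = (λ_{X,Y}) be the adjacency matrix of a minimal encoder of an (n,k,δ) convolutional code C, and let Δ* be any direct complement of ker Φ in Δ. Then Σ_{(X,Y) ∈ Δ*} λ_{X,Y} = we(C_C) and Σ_{(X,Y) ∈ F^δ × F^δ} λ_{X,Y} = q^{δ − r̂} we(C_C). -/

import Mathlib

open Matrix

open Classical in
/-- The (Hamming) weight enumerator of a subset `S ⊆ F^n`. -/
noncomputable def we {n : ℕ} {F : Type} [Fintype F] [DecidableEq F] [Zero F]
    (S : Set (Fin n → F)) : Polynomial ℂ :=
  ∑ a : Fin n → F, if a ∈ S then Polynomial.X ^ hammingNorm a else 0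

set_option maxHeartbeats 2000000 in
open Classical in
/-- Let `Λ = (λ_{X,Y})` be the adjacency matrix of a minimal encoder
of an `(n,k,δ)` convolutional code (entries `λ_{X,Y} = we({X Cm + u D : Y = XA + uB})`,
zero for disconnected pairs), and let `Δ*` be any direct complement of `ker Φ` in `Δ`.
Then `∑_{(X,Y) ∈ Δ*} λ_{X,Y} = we(C_C)` and
`∑_{(X,Y) ∈ F^δ × F^δ} λ_{X,Y} = q^{δ − r̂} we(C_C)`. -/
theorem stmt_14 {k n r rhat : ℕ} {F : Type} [Field F] [Fintype F] [DecidableEq F]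
    (G : Matrix (Fin k) (Fin n) (Polynomial F))
    (d : Fin k → ℕ)
    (hGdeg : ∀ i j, (G i j).natDegree ≤ d i)
    (hGbasic : ∃ G' : Matrix (Fin n) (Fin k) (Polynomial F), G * G' = 1)
    (hGmin : LinearIndependent F (fun i : Fin k => fun j : Fin n => (G i j).coeff (d i)))
    (A : Matrix (Σ i, Fin (d i)) (Σ i, Fin (d i)) F)
    (B : Matrix (Fin k) (Σ i, Fin (d i)) F)
    (Cm : Matrix (Σ i, Fin (d i)) (Fin n) F)
    (D : Matrix (Fin k) (Fin n) F)
    (hA : ∀ x y, A x y = if x.1 = y.1 ∧ (x.2 : ℕ) + 1 = (y.2 : ℕ) then 1 else 0)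
    (hB : ∀ i y, B i y = if i = y.1 ∧ (y.2 : ℕ) = 0 then 1 else 0)
    (hC : ∀ x j, Cm x j = (G x.1 j).coeff ((x.2 : ℕ) + 1))
    (hD : ∀ i j, D i j = (G i j).coeff 0)
    (hr : r = (Finset.univ.filter fun i => 0 < d i).card)
    (lam : (((Σ i, Fin (d i)) → F) × ((Σ i, Fin (d i)) → F)) → Polynomial ℂ)
    (hlam : ∀ w, lam w
      = we {v | ∃ u : Fin k → F, w.2 = w.1 ᵥ* A + u ᵥ* B ∧ v = w.1 ᵥ* Cm + u ᵥ* D})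
    (Δ K Δstar : Submodule F (((Σ i, Fin (d i)) → F) × ((Σ i, Fin (d i)) → F)))
    (CCsub Ccon : Submodule F (Fin n → F))
    (hΔ : (Δ : Set (((Σ i, Fin (d i)) → F) × ((Σ i, Fin (d i)) → F)))
        = {w | ∃ u : Fin k → F, w.2 = w.1 ᵥ* A + u ᵥ* B})
    (hCCsub : (CCsub : Set (Fin n → F))
        = {v | ∃ (X : (Σ i, Fin (d i)) → F) (u : Fin k → F), v = X ᵥ* Cm + u ᵥ* D})
    (hCcon : (Ccon : Set (Fin n → F))
        = {v | ∃ w : Fin k → F, w ᵥ* B = 0 ∧ v = w ᵥ* D})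
    (hK : (K : Set (((Σ i, Fin (d i)) → F) × ((Σ i, Fin (d i)) → F)))
        = {w | (∃ u : Fin k → F, w.2 = w.1 ᵥ* A + u ᵥ* B) ∧
               w.1 ᵥ* Cm + (w.2 ᵥ* Bᵀ) ᵥ* D ∈ Ccon})
    (hCCrank : Module.finrank F CCsub = k + rhat)
    (hCconrank : Module.finrank F Ccon = k - r)
    (hstar1 : Δstar ⊓ K = ⊥) (hstar2 : Δstar ⊔ K = Δ) :
    (∑ w : ((Σ i, Fin (d i)) → F) × ((Σ i, Fin (d i)) → F),
        if w ∈ Δstar then lam w else 0) = we (CCsub : Set (Fin n → F)) ∧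
    (∑ w : ((Σ i, Fin (d i)) → F) × ((Σ i, Fin (d i)) → F), lam w)
      = Polynomial.C ((Fintype.card F : ℂ) ^ ((∑ i, d i) - rhat))
          * we (CCsub : Set (Fin n → F)) := by
  classical
  set q := Fintype.card F with hq
  set f : (((Σ i, Fin (d i)) → F) × ((Σ i, Fin (d i)) → F)) → (Fin n → F) :=
    fun w => w.1 ᵥ* Cm + (w.2 ᵥ* Bᵀ) ᵥ* D with hf
  -- coordinate computations
  have hvB : ∀ (u : Fin k → F) (y : Σ i, Fin (d i)),
      (u ᵥ* B) y = if (y.2 : ℕ) = 0 then u y.1 else 0 := by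
    intro u y
    simp only [Matrix.vecMul, dotProduct, hB]
    by_cases h : (y.2 : ℕ) = 0 <;> simp [h]
  have hvA : ∀ (X : (Σ i, Fin (d i)) → F) (y : Σ i, Fin (d i)),
      (y.2 : ℕ) = 0 → (X ᵥ* A) y = 0 := by
    intro X y hy
    simp [Matrix.vecMul, dotProduct, hA, hy]
  have hcanon : ∀ (X : (Σ i, Fin (d i)) → F) (u : Fin k → F),
      ((X ᵥ* A + u ᵥ* B) ᵥ* Bᵀ) ᵥ* B = u ᵥ* B := by
    intro X u
    funext y
    rw [hvB, hvB]
    by_cases hy : (y.2 : ℕ) = 0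
    · rw [if_pos hy, if_pos hy]
      have hT : ((X ᵥ* A + u ᵥ* B) ᵥ* Bᵀ) y.1 = ∑ y', (X ᵥ* A + u ᵥ* B) y' * B y.1 y' := by
        simp [Matrix.vecMul, dotProduct, Matrix.transpose_apply]
      rw [hT, Finset.sum_eq_single y]
      · rw [hB, if_pos ⟨rfl, hy⟩, mul_one, Pi.add_apply, hvA X y hy, hvB, if_pos hy, zero_add]
      · intro y' _ hne
        rw [hB, if_neg, mul_zero]
        rintro ⟨h1, h2⟩
        apply hne
        obtain ⟨i, t⟩ := y
        obtain ⟨i', t'⟩ := y'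
        dsimp at h1 h2 hy
        subst h1
        congr 1
        exact Fin.ext (h2.trans hy.symm)
      · intro h; exact absurd (Finset.mem_univ y) h
    · rw [if_neg hy, if_neg hy]
  -- membership reformulations
  have hmemΔ : ∀ w, w ∈ Δ ↔ ∃ u : Fin k → F, w.2 = w.1 ᵥ* A + u ᵥ* B := by
    intro w; rw [← SetLike.mem_coe, hΔ]; rfl
  have hmemCC : ∀ v, v ∈ CCsub ↔
      ∃ (X : (Σ i, Fin (d i)) → F) (u : Fin k → F), v = X ᵥ* Cm + u ᵥ* D := by
    intro v; rw [← SetLike.mem_coe, hCCsub]; rfl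
  have hmemCcon : ∀ v, v ∈ Ccon ↔ ∃ wc : Fin k → F, wc ᵥ* B = 0 ∧ v = wc ᵥ* D := by
    intro v; rw [← SetLike.mem_coe, hCcon]; rfl
  have hmemK : ∀ w, w ∈ K ↔
      (∃ u : Fin k → F, w.2 = w.1 ᵥ* A + u ᵥ* B) ∧ f w ∈ Ccon := by
    intro w; rw [← SetLike.mem_coe, hK]; rfl
  have hΔstarle : Δstar ≤ Δ := hstar2 ▸ le_sup_left
  have hKle : K ≤ Δ := hstar2 ▸ le_sup_right
  have hfCC : ∀ w, f w ∈ CCsub := fun w => (hmemCC _).2 ⟨w.1, w.2 ᵥ* Bᵀ, rfl⟩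
  have hCconCC : ∀ v ∈ Ccon, v ∈ CCsub := by
    intro v hv
    obtain ⟨wc, _, hveq⟩ := (hmemCcon v).1 hv
    exact (hmemCC v).2 ⟨0, wc, by simp [hveq]⟩
  have hfsub : ∀ w w', f (w - w') = f w - f w' := by
    intro w w'
    simp only [hf, Prod.fst_sub, Prod.snd_sub, Matrix.sub_vecMul]
    abel
  have hfadd : ∀ w w', f (w + w') = f w + f w' := by
    intro w w'
    simp only [hf, Prod.fst_add, Prod.snd_add, Matrix.add_vecMul]
    abel
  -- the set attached to w ∈ Δ is a coset of Ccon
  have hSet : ∀ w, w ∈ Δ →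
      {v | ∃ u : Fin k → F, w.2 = w.1 ᵥ* A + u ᵥ* B ∧ v = w.1 ᵥ* Cm + u ᵥ* D}
        = {v | v - f w ∈ Ccon} := by
    intro w hw
    obtain ⟨u, hu⟩ := (hmemΔ w).1 hw
    ext v
    simp only [Set.mem_setOf_eq]
    constructor
    · rintro ⟨u', hu', hv⟩
      refine (hmemCcon _).2 ⟨u' - w.2 ᵥ* Bᵀ, ?_, ?_⟩
      · rw [Matrix.sub_vecMul, hu', hcanon, sub_self]
      · rw [hv, hf, Matrix.sub_vecMul]; beta_reduce; abel
    · intro hv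
      obtain ⟨wc, hwc0, hwc⟩ := (hmemCcon _).1 hv
      refine ⟨w.2 ᵥ* Bᵀ + wc, ?_, ?_⟩
      · rw [Matrix.add_vecMul, hwc0, add_zero, hu, hcanon, ← hu]
      · have : v = f w + (v - f w) := by abel
        rw [this, hwc, hf, Matrix.add_vecMul]; beta_reduce; abel
  have hlamΔ : ∀ w, w ∈ Δ → lam w = we {v | v - f w ∈ Ccon} := by
    intro w hw; rw [hlam, hSet w hw]
  have hlam0 : ∀ w, w ∉ Δ → lam w = 0 := by
    intro w hw
    rw [hlam]
    have hempty : {v | ∃ u : Fin k → F, w.2 = w.1 ᵥ* A + u ᵥ* B ∧ v = w.1 ᵥ* Cm + u ᵥ* D}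
        = (∅ : Set (Fin n → F)) := by
      ext v
      simp only [Set.mem_setOf_eq, Set.mem_empty_iff_false, iff_false]
      rintro ⟨u, hu, -⟩
      exact hw ((hmemΔ w).2 ⟨u, hu⟩)
    rw [hempty]
    simp [we]
  -- injectivity on Δstar
  have hinj : ∀ w ∈ Δstar, ∀ w' ∈ Δstar, f w - f w' ∈ Ccon → w = w' := by
    intro w hw w' hw' hc
    have hsub : w - w' ∈ Δstar := sub_mem hw hw'
    have hmem : w - w' ∈ K := by
      refine (hmemK _).2 ⟨(hmemΔ _).1 (hΔstarle hsub), ?_⟩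
      rw [hfsub]; exact hc
    have : w - w' ∈ Δstar ⊓ K := ⟨hsub, hmem⟩
    rw [hstar1] at this
    exact sub_eq_zero.1 (Submodule.mem_bot F |>.1 this)
  -- surjectivity
  have hsurj : ∀ v ∈ CCsub, ∃ w ∈ Δstar, v - f w ∈ Ccon := by
    intro v hv
    obtain ⟨X, u, hvXu⟩ := (hmemCC v).1 hv
    set w0 : (((Σ i, Fin (d i)) → F) × ((Σ i, Fin (d i)) → F)) := (X, X ᵥ* A + u ᵥ* B) with hw0
    have hw0Δ : w0 ∈ Δ := (hmemΔ w0).2 ⟨u, rfl⟩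
    have hvw0 : v - f w0 ∈ Ccon := by
      refine (hmemCcon _).2 ⟨u - w0.2 ᵥ* Bᵀ, ?_, ?_⟩
      · rw [Matrix.sub_vecMul, hw0, hcanon, sub_self]
      · rw [hvXu, hf, Matrix.sub_vecMul]; beta_reduce; abel
    rw [← hstar2] at hw0Δ
    obtain ⟨s, hs, t, ht, hst⟩ := Submodule.mem_sup.1 hw0Δ
    refine ⟨s, hs, ?_⟩
    have hft : f t ∈ Ccon := ((hmemK t).1 ht).2
    have : v - f s = (v - f w0) + f t := by
      rw [← hst, hfadd]; abel
    rw [this]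
    exact add_mem hvw0 hft
  -- Part 1
  have part1 : (∑ w : ((Σ i, Fin (d i)) → F) × ((Σ i, Fin (d i)) → F),
      if w ∈ Δstar then lam w else 0) = we (CCsub : Set (Fin n → F)) := by
    have hrw : ∀ w : (((Σ i, Fin (d i)) → F) × ((Σ i, Fin (d i)) → F)),
        (if w ∈ Δstar then lam w else 0)
        = ∑ a : Fin n → F, if w ∈ Δstar ∧ a - f w ∈ Ccon then Polynomial.X ^ hammingNorm a else 0 := by
      intro w
      by_cases hw : w ∈ Δstar
      · rw [if_pos hw, hlamΔ w (hΔstarle hw)]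
        simp only [we, Set.mem_setOf_eq]
        exact Finset.sum_congr rfl fun a _ => by simp [hw]
      · simp [hw]
    rw [Finset.sum_congr rfl fun w _ => hrw w, Finset.sum_comm]
    simp only [we]
    refine Finset.sum_congr rfl fun a _ => ?_
    by_cases ha : a ∈ CCsub
    · rw [if_pos (by exact ha)]
      obtain ⟨w₀, hw₀s, hw₀c⟩ := hsurj a ha
      rw [Finset.sum_eq_single w₀]
      · rw [if_pos ⟨hw₀s, hw₀c⟩]
      · intro w _ hne
        rw [if_neg]
        rintro ⟨hws, hwc⟩
        refine hne (hinj w hws w₀ hw₀s ?_)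
        have : f w - f w₀ = (a - f w₀) - (a - f w) := by abel
        rw [this]; exact sub_mem hw₀c hwc
      · intro h; exact absurd (Finset.mem_univ w₀) h
    · rw [if_neg (by exact ha)]
      refine Finset.sum_eq_zero fun w _ => ?_
      rw [if_neg]
      rintro ⟨hws, hwc⟩
      apply ha
      have : a = f w + (a - f w) := by abel
      rw [this]
      exact add_mem (hfCC w) (hCconCC _ hwc)
  refine ⟨part1, ?_⟩
  have hsum_sub : ∀ (p : (((Σ i, Fin (d i)) → F) × ((Σ i, Fin (d i)) → F)) → Prop)
      (g : (((Σ i, Fin (d i)) → F) × ((Σ i, Fin (d i)) → F)) → Polynomial ℂ),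
      (∑ w, if p w then g w else 0) = ∑ w : {w // p w}, g w.1 := by
    intro p g
    rw [← Finset.sum_filter]
    exact Finset.sum_subtype _ (by simp) g
  have part1' : (∑ s : {w // w ∈ Δstar}, lam s.1) = we (CCsub : Set (Fin n → F)) := by
    rw [← hsum_sub]; exact part1
  have hsolve : ∀ w, w ∈ Δ → w.2 = w.1 ᵥ* A + (w.2 ᵥ* Bᵀ) ᵥ* B := by
    intro w hw
    obtain ⟨u, hu⟩ := (hmemΔ w).1 hw
    rw [hu, hcanon]
  have hlamK : ∀ s ∈ Δstar, ∀ t ∈ K, lam (s + t) = lam s := by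
    intro s hs t ht
    have hsΔ := hΔstarle hs
    have htΔ := hKle ht
    rw [hlamΔ _ (add_mem hsΔ htΔ), hlamΔ _ hsΔ]
    congr 1
    ext v
    simp only [Set.mem_setOf_eq]
    have hft : f t ∈ Ccon := ((hmemK t).1 ht).2
    constructor
    · intro h
      have hv : v - f s = (v - f (s + t)) + f t := by rw [hfadd]; abel
      rw [hv]; exact add_mem h hft
    · intro h
      have hv : v - f (s + t) = (v - f s) - f t := by rw [hfadd]; abel
      rw [hv]; exact sub_mem h hft
  -- bijection Δstar × K ≃ Δ
  have hg : Function.Bijective (fun p : {w // w ∈ Δstar} × {w // w ∈ K} =>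
      (⟨p.1.1 + p.2.1, add_mem (hΔstarle p.1.2) (hKle p.2.2)⟩ : {w // w ∈ Δ})) := by
    constructor
    · rintro ⟨⟨s, hs⟩, ⟨t, ht⟩⟩ ⟨⟨s', hs'⟩, ⟨t', ht'⟩⟩ h
      simp only [Subtype.mk.injEq] at h
      have h1 : s - s' = t' - t := by
        have := h
        abel_nf
        abel_nf at this ⊢
        linear_combination (norm := abel) this
      have h2 : s - s' ∈ Δstar ⊓ K := ⟨sub_mem hs hs', h1 ▸ sub_mem ht' ht⟩
      rw [hstar1] at h2
      have hss : s = s' := sub_eq_zero.1 ((Submodule.mem_bot F).1 h2)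
      subst hss
      have htt : t = t' := by
        have := add_left_cancel h
        exact this
      subst htt
      rfl
    · rintro ⟨w, hw⟩
      rw [← hstar2] at hw
      obtain ⟨s, hs, t, ht, hst⟩ := Submodule.mem_sup.1 hw
      exact ⟨(⟨s, hs⟩, ⟨t, ht⟩), Subtype.ext hst⟩
  -- bijection Δstar × Ccon ≃ CCsub
  have hg2 : Function.Bijective (fun p : {w // w ∈ Δstar} × {v // v ∈ Ccon} =>
      (⟨f p.1.1 + p.2.1, add_mem (hfCC p.1.1) (hCconCC _ p.2.2)⟩ : {v // v ∈ CCsub})) := by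
    constructor
    · rintro ⟨⟨s, hs⟩, ⟨c, hc⟩⟩ ⟨⟨s', hs'⟩, ⟨c', hc'⟩⟩ h
      simp only [Subtype.mk.injEq] at h
      have h1 : f s - f s' = c' - c := by
        linear_combination (norm := abel) h
      have hss : s = s' := hinj s hs s' hs' (h1 ▸ sub_mem hc' hc)
      subst hss
      have hcc : c = c' := add_left_cancel h
      subst hcc
      rfl
    · rintro ⟨v, hv⟩
      obtain ⟨s, hs, hvc⟩ := hsurj v hv
      refine ⟨(⟨s, hs⟩, ⟨v - f s, hvc⟩), Subtype.ext ?_⟩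
      simp
  -- bijection Δ × kerB ≃ F^δ × F^k
  have hg3 : Function.Bijective (fun p : {w // w ∈ Δ} × {u : Fin k → F // u ᵥ* B = 0} =>
      ((p.1.1.1, p.1.1.2 ᵥ* Bᵀ + p.2.1) : ((Σ i, Fin (d i)) → F) × (Fin k → F))) := by
    constructor
    · rintro ⟨⟨w, hw⟩, ⟨u₀, hu₀⟩⟩ ⟨⟨w', hw'⟩, ⟨u₀', hu₀'⟩⟩ h
      simp only [Prod.mk.injEq] at h
      obtain ⟨h1, h2⟩ := h
      have hBeq : (w.2 ᵥ* Bᵀ) ᵥ* B = (w'.2 ᵥ* Bᵀ) ᵥ* B := by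
        have := congrArg (fun v => v ᵥ* B) h2
        simpa [Matrix.add_vecMul, hu₀, hu₀'] using this
      have hw2 : w.2 = w'.2 := by
        rw [hsolve w hw, hsolve w' hw', h1, hBeq]
      have hweq : w = w' := Prod.ext h1 hw2
      subst hweq
      have : u₀ = u₀' := add_left_cancel h2
      subst this
      rfl
    · rintro ⟨X, u⟩
      have hmem : ((X, X ᵥ* A + u ᵥ* B) : (((Σ i, Fin (d i)) → F) × ((Σ i, Fin (d i)) → F))) ∈ Δ :=
        (hmemΔ _).2 ⟨u, rfl⟩
      refine ⟨(⟨(X, X ᵥ* A + u ᵥ* B), hmem⟩, ⟨u - (X ᵥ* A + u ᵥ* B) ᵥ* Bᵀ, ?_⟩), ?_⟩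
      · rw [Matrix.sub_vecMul, hcanon, sub_self]
      · simp
  -- cardinalities
  have cardSigma : Fintype.card (Σ i, Fin (d i)) = ∑ i, d i := by simp
  have cardF1 : Fintype.card ((Σ i, Fin (d i)) → F) = q ^ (∑ i, d i) := by
    rw [Fintype.card_fun, cardSigma]
  have cardF2 : Fintype.card (Fin k → F) = q ^ k := by
    rw [Fintype.card_fun, Fintype.card_fin]
  have cardKer : Fintype.card {u : Fin k → F // u ᵥ* B = 0} = q ^ (k - r) := by
    have hbij : Function.Bijective (fun (u : {u : Fin k → F // u ᵥ* B = 0}) =>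
        (fun i : {i : Fin k // ¬ 0 < d i} => u.1 i.1)) := by
      constructor
      · rintro ⟨u, hu⟩ ⟨u', hu'⟩ h
        refine Subtype.ext (funext fun i => ?_)
        by_cases hi : 0 < d i
        · have e1 : (u ᵥ* B) ⟨i, ⟨0, hi⟩⟩ = 0 := by rw [hu]; rfl
          have e2 : (u' ᵥ* B) ⟨i, ⟨0, hi⟩⟩ = 0 := by rw [hu']; rfl
          rw [hvB] at e1 e2
          simpa using e1.trans e2.symm
        · exact congrFun h ⟨i, hi⟩
      · intro g
        refine ⟨⟨fun i => if h : 0 < d i then 0 else g ⟨i, h⟩, ?_⟩, ?_⟩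
        · funext y
          rw [hvB]
          by_cases hy : (y.2 : ℕ) = 0
          · rw [if_pos hy, dif_pos y.2.pos]; rfl
          · rw [if_neg hy]; rfl
        · funext i
          exact dif_neg i.2
    rw [Fintype.card_of_bijective hbij, Fintype.card_fun, Fintype.card_subtype]
    have h := Finset.card_filter_add_card_filter_not
        (s := (Finset.univ : Finset (Fin k))) (p := fun i => 0 < d i)
    simp only [Finset.card_univ, Fintype.card_fin] at h
    have hco : (Finset.univ.filter fun i : Fin k => ¬ 0 < d i).card = k - r := by omega
    rw [hco]
  have cardCC : Fintype.card {v // v ∈ CCsub} = q ^ (k + rhat) := by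
    rw [Module.card_eq_pow_finrank (K := F) (V := CCsub), hCCrank]
  have cardCcon : Fintype.card {v // v ∈ Ccon} = q ^ (k - r) := by
    rw [Module.card_eq_pow_finrank (K := F) (V := Ccon), hCconrank]
  have cardK : Fintype.card {w // w ∈ K} = q ^ (Module.finrank F K) :=
    Module.card_eq_pow_finrank (K := F) (V := K)
  have c3 : Fintype.card {w // w ∈ Δstar} * Fintype.card {w // w ∈ K}
      = Fintype.card {w // w ∈ Δ} := by
    rw [← Fintype.card_prod]
    exact Fintype.card_of_bijective hg
  have c4 : Fintype.card {w // w ∈ Δstar} * q ^ (k - r) = q ^ (k + rhat) := by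
    rw [← cardCcon, ← Fintype.card_prod, Fintype.card_of_bijective hg2, cardCC]
  have c1 : Fintype.card {w // w ∈ Δ} * q ^ (k - r) = q ^ (∑ i, d i) * q ^ k := by
    rw [← cardKer, ← Fintype.card_prod, Fintype.card_of_bijective hg3,
      Fintype.card_prod, cardF1, cardF2]
  have q2 : 2 ≤ q := Fintype.one_lt_card
  have hKcard : Fintype.card {w // w ∈ K} = q ^ ((∑ i, d i) - rhat) := by
    have key : q ^ (k + rhat + Module.finrank F K) = q ^ ((∑ i, d i) + k) := by
      rw [pow_add, ← c4, pow_add, ← cardK, mul_assoc, mul_comm (q ^ (k-r)), ← mul_assoc, c3,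
        mul_comm, ← c1, mul_comm]
    have h2 := Nat.pow_right_injective q2 key
    have hexp : Module.finrank F ↥K = (∑ i, d i) - rhat := by omega
    rw [cardK, hexp]
  -- final computation
  have step1 : (∑ w : ((Σ i, Fin (d i)) → F) × ((Σ i, Fin (d i)) → F), lam w)
      = ∑ w : {w // w ∈ Δ}, lam w.1 := by
    rw [← hsum_sub (· ∈ Δ) lam]
    refine Finset.sum_congr rfl fun w _ => ?_
    by_cases h : w ∈ Δ
    · rw [if_pos h]
    · rw [if_neg h, hlam0 w h]
  have step2 : (∑ w : {w // w ∈ Δ}, lam w.1)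
      = ∑ p : {w // w ∈ Δstar} × {w // w ∈ K}, lam (p.1.1 + p.2.1) :=
    (Fintype.sum_bijective _ hg _ _ (fun p => rfl)).symm
  rw [step1, step2, Fintype.sum_prod_type]
  have step3 : ∀ s : {w // w ∈ Δstar},
      (∑ t : {w // w ∈ K}, lam (s.1 + t.1)) = (Fintype.card {w // w ∈ K}) • lam s.1 := by
    intro s
    rw [Finset.sum_congr rfl fun t _ => hlamK s.1 s.2 t.1 t.2, Finset.sum_const,
      Finset.card_univ]
  rw [Finset.sum_congr rfl fun s _ => step3 s, ← Finset.smul_sum, part1', hKcard]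
  rw [nsmul_eq_mul]
  congr 1
  push_cast
  simp [Polynomial.C_pow]
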